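/- Let a, c, E be real numbers and let u₁, u₂ ∈ ℂ satisfy u₁ + u₂ = a + i·E/2 and u₁·u₂ = c, and suppose that n + u₁ ≠ 0 and n + u₂ ≠ 0 for every positive integer n. Then the sequence N ↦ exp( −i·E·log N ) · Π_{n=1}^{N} ( n + a + c/n + i·E/2 )/( n + a + c/n − i·E/2 ) converges, as N → ∞, to Γ(1 + conj(u₁))·Γ(1 + conj(u₂)) / ( Γ(1 + u₁)·Γ(1 + u₂) ), where Γ denotes the complex Gamma function and conj denotes complex conjugation. -/

import Mathlib

open Complex Finset Filter Topology

private lemma range_prod_eq_Icc (u : ℂ) (N : ℕ) :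
    ∏ j ∈ Finset.range N, (1 + u + (j : ℂ)) = ∏ n ∈ Finset.Icc 1 N, ((n : ℂ) + u) := by
  induction N with
  | zero => simp
  | succ N ih =>
    rw [Finset.prod_range_succ, ih, Finset.prod_Icc_succ_top (by omega : 1 ≤ N + 1)]
    push_cast; ring

private lemma inv_nat_tendsto : Tendsto (fun N : ℕ => ((N : ℂ))⁻¹) atTop (𝓝 0) := by
  have h := tendsto_inv_atTop_nhds_zero_nat (𝕜 := ℝ)
  have h2 := (Complex.continuous_ofReal.tendsto 0).comp h
  simp only [Complex.ofReal_zero] at h2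
  refine h2.congr fun n => ?_
  simp [Function.comp]

private lemma g_tendsto (u : ℂ) (hu : ∀ n : ℕ, 0 < n → (n : ℂ) + u ≠ 0) :
    Tendsto (fun N : ℕ => (N : ℂ) ^ u * (N.factorial : ℂ) / ∏ n ∈ Finset.Icc 1 N, ((n : ℂ) + u))
      atTop (𝓝 (Complex.Gamma (1 + u))) := by
  have hratio : Tendsto (fun N : ℕ => (u + (N : ℂ) + 1) / (N : ℂ)) atTop (𝓝 1) := by
    have h : Tendsto (fun N : ℕ => (u + 1) * ((N : ℂ))⁻¹ + 1) atTop (𝓝 ((u + 1) * 0 + 1)) :=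
      ((tendsto_const_nhds.mul inv_nat_tendsto).add tendsto_const_nhds)
    rw [mul_zero, zero_add] at h
    refine h.congr' ?_
    filter_upwards [eventually_ge_atTop 1] with N hN
    have hN0 : (N : ℂ) ≠ 0 := Nat.cast_ne_zero.mpr (by omega)
    field_simp
    ring
  have h := (Complex.GammaSeq_tendsto_Gamma (1 + u)).mul hratio
  rw [mul_one] at h
  refine h.congr' ?_
  filter_upwards [eventually_ge_atTop 1] with N hN
  have hN0 : (N : ℂ) ≠ 0 := Nat.cast_ne_zero.mpr (by omega)
  have hP : (∏ n ∈ Finset.Icc 1 N, ((n : ℂ) + u)) ≠ 0 :=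
    Finset.prod_ne_zero_iff.mpr fun n hn => hu n (by simp at hn; omega)
  have htop : (u + (N : ℂ) + 1) ≠ 0 := by
    have := hu (N + 1) (by omega)
    push_cast at this ⊢
    intro h0; apply this; linear_combination h0
  have hpow : (N : ℂ) ^ ((1 : ℂ) + u) = (N : ℂ) * (N : ℂ) ^ u := by
    rw [Complex.cpow_add _ _ hN0, Complex.cpow_one]
  rw [Complex.GammaSeq, range_prod_eq_Icc u (N + 1),
    Finset.prod_Icc_succ_top (by omega : 1 ≤ N + 1), hpow]
  have hc : ((N + 1 : ℕ) : ℂ) + u = u + (N : ℂ) + 1 := by push_cast; ring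
  rw [hc]
  set P := ∏ n ∈ Finset.Icc 1 N, ((n : ℂ) + u) with hPdef
  rw [div_mul_div_comm, div_eq_div_iff (by exact mul_ne_zero (mul_ne_zero hP htop) hN0) hP]
  ring

set_option maxHeartbeats 1000000 in
theorem modified_levels_gamma_limit
    (a c E : ℝ) (u₁ u₂ : ℂ)
    (hsum : u₁ + u₂ = (a : ℂ) + Complex.I * (E : ℂ) / 2)
    (hprod : u₁ * u₂ = (c : ℂ))
    (hne : ∀ n : ℕ, 0 < n → (n : ℂ) + u₁ ≠ 0 ∧ (n : ℂ) + u₂ ≠ 0) :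
    Tendsto (fun N : ℕ =>
        Complex.exp (-Complex.I * (E : ℂ) * (Real.log (N : ℝ) : ℂ)) *
          ∏ n ∈ Finset.Icc 1 N,
            (((n : ℂ) + (a : ℂ) + (c : ℂ) / (n : ℂ) + Complex.I * (E : ℂ) / 2) /
              ((n : ℂ) + (a : ℂ) + (c : ℂ) / (n : ℂ) - Complex.I * (E : ℂ) / 2)))
      atTop
      (nhds ((Complex.Gamma (1 + (starRingEnd ℂ) u₁) * Complex.Gamma (1 + (starRingEnd ℂ) u₂)) /
        (Complex.Gamma (1 + u₁) * Complex.Gamma (1 + u₂)))) := by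
  set v₁ := (starRingEnd ℂ) u₁
  set v₂ := (starRingEnd ℂ) u₂
  have hvsum : v₁ + v₂ = (a : ℂ) - Complex.I * (E : ℂ) / 2 := by
    have h := congrArg (starRingEnd ℂ) hsum
    simp only [map_add, map_mul, map_div₀, Complex.conj_ofReal, Complex.conj_I, map_ofNat] at h
    rw [h]; ring
  have hvprod : v₁ * v₂ = (c : ℂ) := by
    have := congrArg (starRingEnd ℂ) hprod
    simpa [v₁, v₂, Complex.conj_ofReal] using this
  have hne1 : ∀ n : ℕ, 0 < n → (n : ℂ) + u₁ ≠ 0 := fun n hn => (hne n hn).1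
  have hne2 : ∀ n : ℕ, 0 < n → (n : ℂ) + u₂ ≠ 0 := fun n hn => (hne n hn).2
  have hnev1 : ∀ n : ℕ, 0 < n → (n : ℂ) + v₁ ≠ 0 := by
    intro n hn h0
    apply hne1 n hn
    have := congrArg (starRingEnd ℂ) h0
    simpa [v₁] using this
  have hnev2 : ∀ n : ℕ, 0 < n → (n : ℂ) + v₂ ≠ 0 := by
    intro n hn h0
    apply hne2 n hn
    have := congrArg (starRingEnd ℂ) h0
    simpa [v₂] using this
  have hG1 : Complex.Gamma (1 + u₁) ≠ 0 := by
    apply Complex.Gamma_ne_zero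
    intro m h0
    exact hne1 (m + 1) (by omega) (by push_cast; linear_combination h0)
  have hG2 : Complex.Gamma (1 + u₂) ≠ 0 := by
    apply Complex.Gamma_ne_zero
    intro m h0
    exact hne2 (m + 1) (by omega) (by push_cast; linear_combination h0)
  have hlim := (((g_tendsto v₁ hnev1).mul (g_tendsto v₂ hnev2)).div
    ((g_tendsto u₁ hne1).mul (g_tendsto u₂ hne2)) (mul_ne_zero hG1 hG2))
  refine hlim.congr' ?_
  filter_upwards [eventually_ge_atTop 1] with N hN
  simp only [Pi.div_apply]
  have hN0 : (N : ℂ) ≠ 0 := Nat.cast_ne_zero.mpr (by omega)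
  -- rewrite the product
  have hfac : ∀ n ∈ Finset.Icc 1 N,
      (((n : ℂ) + (a : ℂ) + (c : ℂ) / (n : ℂ) + Complex.I * (E : ℂ) / 2) /
        ((n : ℂ) + (a : ℂ) + (c : ℂ) / (n : ℂ) - Complex.I * (E : ℂ) / 2))
      = (((n : ℂ) + u₁) * ((n : ℂ) + u₂)) / (((n : ℂ) + v₁) * ((n : ℂ) + v₂)) := by
    intro n hn
    have hn1 : 0 < n := by simp at hn; omega
    have hn0 : (n : ℂ) ≠ 0 := Nat.cast_ne_zero.mpr (by omega)
    have hnum : (n : ℂ) + (a : ℂ) + (c : ℂ) / (n : ℂ) + Complex.I * (E : ℂ) / 2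
        = (((n : ℂ) + u₁) * ((n : ℂ) + u₂)) / (n : ℂ) := by
      field_simp
      linear_combination (-2*(n : ℂ)) * hsum + (-2) * hprod
    have hden : (n : ℂ) + (a : ℂ) + (c : ℂ) / (n : ℂ) - Complex.I * (E : ℂ) / 2
        = (((n : ℂ) + v₁) * ((n : ℂ) + v₂)) / (n : ℂ) := by
      field_simp
      linear_combination (-2*(n : ℂ)) * hvsum + (-2) * hvprod
    rw [hnum, hden]
    have hd1 := hnev1 n hn1
    have hd2 := hnev2 n hn1
    rw [div_div_div_eq, mul_comm ((n : ℂ)) (((n : ℂ) + v₁) * ((n : ℂ) + v₂))]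
    rw [mul_div_mul_right _ _ hn0]
  rw [Finset.prod_congr rfl hfac, Finset.prod_div_distrib, Finset.prod_mul_distrib,
    Finset.prod_mul_distrib]
  -- rewrite the exponential
  have hexp : Complex.exp (-Complex.I * (E : ℂ) * (Real.log (N : ℝ) : ℂ))
      = (N : ℂ) ^ v₁ * (N : ℂ) ^ v₂ / ((N : ℂ) ^ u₁ * (N : ℂ) ^ u₂) := by
    have hlog : Complex.log (N : ℂ) = (Real.log (N : ℝ) : ℂ) := by
      rw [show ((N : ℕ) : ℂ) = ((N : ℝ) : ℂ) by push_cast; ring,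
        Complex.ofReal_log (Nat.cast_nonneg N)]
    have h1 : (N : ℂ) ^ (v₁ + v₂ - (u₁ + u₂))
        = Complex.exp (-Complex.I * (E : ℂ) * (Real.log (N : ℝ) : ℂ)) := by
      rw [Complex.cpow_def_of_ne_zero hN0, hlog]
      congr 1
      rw [hvsum, hsum]
      ring
    rw [← h1, Complex.cpow_sub _ _ hN0, Complex.cpow_add _ _ hN0, Complex.cpow_add _ _ hN0]
  rw [hexp]
  have hPu1 : (∏ n ∈ Finset.Icc 1 N, ((n : ℂ) + u₁)) ≠ 0 :=
    Finset.prod_ne_zero_iff.mpr fun n hn => hne1 n (by simp at hn; omega)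
  have hPu2 : (∏ n ∈ Finset.Icc 1 N, ((n : ℂ) + u₂)) ≠ 0 :=
    Finset.prod_ne_zero_iff.mpr fun n hn => hne2 n (by simp at hn; omega)
  have hPv1 : (∏ n ∈ Finset.Icc 1 N, ((n : ℂ) + v₁)) ≠ 0 :=
    Finset.prod_ne_zero_iff.mpr fun n hn => hnev1 n (by simp at hn; omega)
  have hPv2 : (∏ n ∈ Finset.Icc 1 N, ((n : ℂ) + v₂)) ≠ 0 :=
    Finset.prod_ne_zero_iff.mpr fun n hn => hnev2 n (by simp at hn; omega)
  have hcp : ∀ w : ℂ, (N : ℂ) ^ w ≠ 0 := fun w => by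
    rw [Complex.cpow_def_of_ne_zero hN0]; exact Complex.exp_ne_zero _
  have hfct : ((N.factorial : ℂ)) ≠ 0 := Nat.cast_ne_zero.mpr (Nat.factorial_ne_zero N)
  set A := (N : ℂ) ^ v₁
  set B := (N : ℂ) ^ v₂
  set Cc := (N : ℂ) ^ u₁
  set D := (N : ℂ) ^ u₂
  set P₁ := ∏ n ∈ Finset.Icc 1 N, ((n : ℂ) + u₁)
  set P₂ := ∏ n ∈ Finset.Icc 1 N, ((n : ℂ) + u₂)
  set Q₁ := ∏ n ∈ Finset.Icc 1 N, ((n : ℂ) + v₁)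
  set Q₂ := ∏ n ∈ Finset.Icc 1 N, ((n : ℂ) + v₂)
  have hA : A ≠ 0 := hcp v₁
  have hB : B ≠ 0 := hcp v₂
  have hC : Cc ≠ 0 := hcp u₁
  have hD : D ≠ 0 := hcp u₂
  field_simp
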